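/- For every m ∈ ℤ, the charge-m subspace F^(m) is irreducible under the gl_∞-action: each operator ψ_i ψ_j* (i, j ∈ ℤ) preserves F^(m), and the only ℂ-subspaces of F^(m) invariant under all the operators ψ_i ψ_j* are 0 and F^(m) itself. -/

import Mathlib

open Finsupp

/-- A semi-infinite monomial: a strictly decreasing sequence `seq : ℕ → ℤ` such that
for some `m : ℤ` (its charge) one has `seq k = m - k` for all sufficiently large `k`. -/
structure SIM : Type where
  seq : ℕ → ℤ
  anti : StrictAnti seq
  ex_charge : ∃ m : ℤ, ∃ N : ℕ, ∀ k, N ≤ k → seq k = m - (k : ℤ)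

/-- Full fermionic Fock space: the free `ℂ`-vector space on the set of all
semi-infinite monomials. -/
abbrev FockF : Type := SIM →₀ ℂ

namespace SIM

/-- `φ` is a semi-infinite monomial of charge `m`. -/
def HasCharge (φ : SIM) (m : ℤ) : Prop := ∃ N : ℕ, ∀ k, N ≤ k → φ.seq k = m - (k : ℤ)

theorem exists_lt (φ : SIM) (j : ℤ) : ∃ n : ℕ, φ.seq n < j := by
  obtain ⟨m, N, hN⟩ := φ.ex_charge
  refine ⟨N + (m - j).toNat + 1, ?_⟩
  have h1 := hN (N + (m - j).toNat + 1) (by omega)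
  omega

/-- The position at which `j` is inserted into `φ`: the least `n` with `φ.seq n < j`.
If `i_s > j > i_{s+1}` this equals `s + 1`, and it equals `0` if `j > i_0`. -/
noncomputable def wedgePos (φ : SIM) (j : ℤ) : ℕ := Nat.find (φ.exists_lt j)

/-- The semi-infinite monomial obtained from `φ` by inserting `j` (assuming `j` does not
occur in `φ`). -/
noncomputable def insertSIM (φ : SIM) (j : ℤ) (hj : ∀ s, φ.seq s ≠ j) : SIM where
  seq k := if k < φ.wedgePos j then φ.seq k else if k = φ.wedgePos j then j else φ.seq (k - 1)
  anti := by
    have hs : φ.seq (φ.wedgePos j) < j := Nat.find_spec (φ.exists_lt j)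
    have hm : ∀ k, k < φ.wedgePos j → j < φ.seq k := by
      intro k hk
      have h1 := Nat.find_min (φ.exists_lt j) hk
      have h2 := hj k
      omega
    have ha : ∀ a b : ℕ, a < b → φ.seq b < φ.seq a := fun a b h => φ.anti h
    apply strictAnti_nat_of_succ_lt
    intro k
    try dsimp only
    rcases lt_trichotomy k (φ.wedgePos j) with hk | hk | hk
    · rcases Nat.lt_or_ge (k + 1) (φ.wedgePos j) with hk1 | hk1
      · rw [if_pos hk, if_pos hk1]
        exact ha k (k + 1) (by omega)
      · have hk1' : k + 1 = φ.wedgePos j := by omega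
        rw [if_pos hk, if_neg (by omega), if_pos hk1']
        exact hm k hk
    · rw [if_neg (by omega), if_neg (by omega), if_neg (by omega), if_pos hk,
        (by omega : k + 1 - 1 = k), hk]
      exact hs
    · rw [if_neg (by omega), if_neg (by omega), if_neg (by omega), if_neg (by omega),
        (by omega : k + 1 - 1 = k)]
      exact ha (k - 1) k (by omega)
  ex_charge := by
    obtain ⟨m, N, hN⟩ := φ.ex_charge
    refine ⟨m + 1, N + φ.wedgePos j + 1, fun k hk => ?_⟩
    try dsimp only
    rw [if_neg (by omega), if_neg (by omega)]
    have h3 := hN (k - 1) (by omega)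
    omega

/-- The semi-infinite monomial obtained from `φ` by deleting the entry in position `s`. -/
noncomputable def removeSIM (φ : SIM) (s : ℕ) : SIM where
  seq k := if k < s then φ.seq k else φ.seq (k + 1)
  anti := by
    apply strictAnti_nat_of_succ_lt
    intro k
    try dsimp only
    split_ifs <;> exact φ.anti (by omega)
  ex_charge := by
    obtain ⟨m, N, hN⟩ := φ.ex_charge
    refine ⟨m - 1, N + s, fun k hk => ?_⟩
    try dsimp only
    rw [if_neg (by omega)]
    have h3 := hN (k + 1) (by omega)
    omega

end SIM

open Classical in
/-- The wedging operator `ψ_j` on full fermionic Fock space.  On a basis element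
`φ = (i_0, i_1, ...)` it is `0` if `j = i_s` for some `s`, and otherwise it is
`(-1)^n` times the basis element obtained by inserting `j` in position `n`
(so `(-1)^{s+1}` when `i_s > j > i_{s+1}`, and `+1` when `j > i_0`). -/
noncomputable def psi (j : ℤ) : FockF →ₗ[ℂ] FockF :=
  Finsupp.lift FockF ℂ SIM fun φ =>
    if hj : ∀ s, φ.seq s ≠ j then
      ((-1 : ℂ) ^ (φ.wedgePos j)) • Finsupp.single (φ.insertSIM j hj) 1
    else 0

open Classical in
/-- The contracting operator `ψ_j^*` on full fermionic Fock space.  On a basis element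
`φ = (i_0, i_1, ...)` it is `0` if `j ≠ i_s` for all `s`, and `(-1)^s` times the basis
element obtained by deleting `i_s` if `j = i_s`. -/
noncomputable def psiStar (j : ℤ) : FockF →ₗ[ℂ] FockF :=
  Finsupp.lift FockF ℂ SIM fun φ =>
    if hj : ∃ s, φ.seq s = j then
      ((-1 : ℂ) ^ hj.choose) • Finsupp.single (φ.removeSIM hj.choose) 1
    else 0

/-- The charge-`m` subspace `F^{(m)}` of full fermionic Fock space: the span of the
semi-infinite monomials of charge `m`. -/
noncomputable def chargeSubspace (m : ℤ) : Submodule ℂ FockF :=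
  Submodule.span ℂ {x : FockF | ∃ φ : SIM, φ.HasCharge m ∧ x = Finsupp.single φ 1}


namespace SIM

theorem ext' {φ ψ : SIM} (h : φ.seq = ψ.seq) : φ = ψ := by
  cases φ; cases ψ; simpa using h

theorem seq_inj (φ : SIM) : Function.Injective φ.seq := φ.anti.injective

theorem wedgePos_spec (φ : SIM) (j : ℤ) : φ.seq (φ.wedgePos j) < j :=
  Nat.find_spec (φ.exists_lt j)

theorem wedgePos_min (φ : SIM) (j : ℤ) {k : ℕ} (h : k < φ.wedgePos j) : j ≤ φ.seq k :=
  le_of_not_gt (Nat.find_min (φ.exists_lt j) h)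

theorem insertSIM_seq (φ : SIM) (j : ℤ) (hj : ∀ s, φ.seq s ≠ j) (k : ℕ) :
    (φ.insertSIM j hj).seq k =
      if k < φ.wedgePos j then φ.seq k else if k = φ.wedgePos j then j else φ.seq (k - 1) := rfl

theorem removeSIM_seq (φ : SIM) (s k : ℕ) :
    (φ.removeSIM s).seq k = if k < s then φ.seq k else φ.seq (k + 1) := rfl

theorem range_insertSIM (φ : SIM) (j : ℤ) (hj : ∀ s, φ.seq s ≠ j) :
    Set.range (φ.insertSIM j hj).seq = insert j (Set.range φ.seq) := by
  ext x
  constructor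
  · rintro ⟨k, rfl⟩
    rw [insertSIM_seq]
    split_ifs
    · exact Or.inr ⟨k, rfl⟩
    · exact Or.inl rfl
    · exact Or.inr ⟨k - 1, rfl⟩
  · rintro (rfl | ⟨k, rfl⟩)
    · exact ⟨φ.wedgePos x, by rw [insertSIM_seq, if_neg (lt_irrefl _), if_pos rfl]⟩
    · by_cases hk : k < φ.wedgePos j
      · exact ⟨k, by rw [insertSIM_seq, if_pos hk]⟩
      · refine ⟨k + 1, ?_⟩
        rw [insertSIM_seq, if_neg (by omega), if_neg (by omega)]
        simp

theorem range_removeSIM (φ : SIM) (s : ℕ) :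
    Set.range (φ.removeSIM s).seq = Set.range φ.seq \ {φ.seq s} := by
  ext x
  constructor
  · rintro ⟨k, rfl⟩
    rw [removeSIM_seq]
    split_ifs with h
    · exact ⟨⟨k, rfl⟩, fun he => by have := φ.seq_inj he; omega⟩
    · exact ⟨⟨k + 1, rfl⟩, fun he => by have := φ.seq_inj he; omega⟩
  · rintro ⟨⟨k, rfl⟩, hk⟩
    have hks : k ≠ s := fun h => hk (by rw [h]; rfl)
    by_cases h : k < s
    · exact ⟨k, by rw [removeSIM_seq, if_pos h]⟩
    · refine ⟨k - 1, ?_⟩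
      rw [removeSIM_seq, if_neg (by omega)]
      congr 1
      omega

theorem hasCharge_removeSIM {φ : SIM} {m : ℤ} (h : φ.HasCharge m) (s : ℕ) :
    (φ.removeSIM s).HasCharge (m - 1) := by
  obtain ⟨N, hN⟩ := h
  refine ⟨N + s, fun k hk => ?_⟩
  rw [removeSIM_seq, if_neg (by omega)]
  have := hN (k + 1) (by omega)
  omega

theorem hasCharge_insertSIM {φ : SIM} {m : ℤ} (h : φ.HasCharge m) (j : ℤ)
    (hj : ∀ s, φ.seq s ≠ j) : (φ.insertSIM j hj).HasCharge (m + 1) := by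
  obtain ⟨N, hN⟩ := h
  refine ⟨N + φ.wedgePos j + 1, fun k hk => ?_⟩
  rw [insertSIM_seq, if_neg (by omega), if_neg (by omega)]
  have := hN (k - 1) (by omega)
  omega

theorem not_mem_removeSIM (φ : SIM) (s : ℕ) (t : ℕ) :
    (φ.removeSIM s).seq t ≠ φ.seq s := by
  rw [removeSIM_seq]
  split_ifs with h <;> intro he <;> have := φ.seq_inj he <;> omega

theorem wedgePos_removeSIM (φ : SIM) (s : ℕ) :
    (φ.removeSIM s).wedgePos (φ.seq s) = s := by
  rw [wedgePos, Nat.find_eq_iff]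
  constructor
  · rw [removeSIM_seq, if_neg (lt_irrefl _)]
    exact φ.anti (by omega)
  · intro k hk
    rw [removeSIM_seq, if_pos hk, not_lt]
    exact le_of_lt (φ.anti hk)

theorem insert_removeSIM (φ : SIM) (s : ℕ)
    (h : ∀ t, (φ.removeSIM s).seq t ≠ φ.seq s) :
    (φ.removeSIM s).insertSIM (φ.seq s) h = φ := by
  apply ext'
  funext k
  rw [insertSIM_seq, wedgePos_removeSIM]
  rcases lt_trichotomy k s with hk | hk | hk
  · rw [if_pos hk, removeSIM_seq, if_pos hk]
  · rw [if_neg (by omega), if_pos hk, hk]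
  · rw [if_neg (by omega), if_neg (by omega), removeSIM_seq, if_neg (by omega)]
    congr 1
    omega

theorem seq_le_of_range_subset {φ ψ : SIM}
    (h : Set.range φ.seq ⊆ Set.range ψ.seq) (k : ℕ) : φ.seq k ≤ ψ.seq k := by
  have hf : ∀ n : ℕ, ∃ l : ℕ, ψ.seq l = φ.seq n := fun n => h ⟨n, rfl⟩
  set f : ℕ → ℕ := fun n => (hf n).choose with hfdef
  have hfs : ∀ n, ψ.seq (f n) = φ.seq n := fun n => (hf n).choose_spec
  have hmono : StrictMono f := by
    intro a b hab
    have : ψ.seq (f b) < ψ.seq (f a) := by rw [hfs, hfs]; exact φ.anti hab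
    exact ψ.anti.lt_iff_gt.mp this
  calc φ.seq k = ψ.seq (f k) := (hfs k).symm
    _ ≤ ψ.seq k := ψ.anti.antitone (hmono.le_apply)

theorem eq_of_range_subset {φ ψ : SIM} {m : ℤ} (hφ : φ.HasCharge m) (hψ : ψ.HasCharge m)
    (h : Set.range φ.seq ⊆ Set.range ψ.seq) : φ = ψ := by
  obtain ⟨N1, hN1⟩ := hφ
  obtain ⟨N2, hN2⟩ := hψ
  set N := max N1 N2 with hN
  have htail : ∀ k, N ≤ k → φ.seq k = ψ.seq k := by
    intro k hk
    rw [hN1 k (by omega), hN2 k (by omega)]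
  have hf : ∀ n : ℕ, ∃ l : ℕ, ψ.seq l = φ.seq n := fun n => h ⟨n, rfl⟩
  set f : ℕ → ℕ := fun n => (hf n).choose with hfdef
  have hfs : ∀ n, ψ.seq (f n) = φ.seq n := fun n => (hf n).choose_spec
  have hmono : StrictMono f := by
    intro a b hab
    have : ψ.seq (f b) < ψ.seq (f a) := by rw [hfs, hfs]; exact φ.anti hab
    exact ψ.anti.lt_iff_gt.mp this
  have hfN : f N = N := by
    apply ψ.seq_inj
    rw [hfs, htail N le_rfl]
  apply ext'
  funext k
  rcases le_or_gt N k with hk | hk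
  · exact htail k hk
  · have h1 : k ≤ f k := hmono.le_apply
    have h2 : f k + (N - k) ≤ f (k + (N - k)) := by
      clear hfN
      induction (N - k) with
      | zero => simp
      | succ d ih =>
        have := hmono (show k + d < k + (d+1) by omega)
        omega
    have h3 : k + (N - k) = N := by omega
    rw [h3, hfN] at h2
    have : f k = k := by omega
    rw [← hfs k, this]

theorem charge_unique {φ : SIM} {m m' : ℤ} (h : φ.HasCharge m) (h' : φ.HasCharge m') :
    m = m' := by
  obtain ⟨N, hN⟩ := h
  obtain ⟨N', hN'⟩ := h'
  have h1 := hN (max N N') (by omega)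
  have h2 := hN' (max N N') (by omega)
  omega

theorem diff_finite {φ ψ : SIM} {m : ℤ} (hφ : φ.HasCharge m) (hψ : ψ.HasCharge m) :
    (Set.range φ.seq \ Set.range ψ.seq).Finite := by
  obtain ⟨N1, hN1⟩ := hφ
  obtain ⟨N2, hN2⟩ := hψ
  apply Set.Finite.subset ((Set.finite_Iio (max N1 N2)).image φ.seq)
  rintro x ⟨⟨k, rfl⟩, hx⟩
  refine ⟨k, ?_, rfl⟩
  by_contra hk
  exact hx ⟨k, by rw [hN2 k (by simp at hk; omega), ← hN1 k (by simp at hk; omega)]⟩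

end SIM

open Classical in
theorem psiStar_single (j : ℤ) (φ : SIM) :
    psiStar j (Finsupp.single φ 1) =
      if hj : ∃ s, φ.seq s = j then
        ((-1 : ℂ) ^ hj.choose) • Finsupp.single (φ.removeSIM hj.choose) 1
      else 0 := by
  rw [psiStar, Finsupp.lift_apply, Finsupp.sum_single_index (by simp), one_smul]

open Classical in
theorem psi_single (j : ℤ) (φ : SIM) :
    psi j (Finsupp.single φ 1) =
      if hj : ∀ s, φ.seq s ≠ j then
        ((-1 : ℂ) ^ (φ.wedgePos j)) • Finsupp.single (φ.insertSIM j hj) 1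
      else 0 := by
  rw [psi, Finsupp.lift_apply, Finsupp.sum_single_index (by simp), one_smul]

open Classical in
theorem EE_diag (i : ℤ) (φ : SIM) :
    psi i (psiStar i (Finsupp.single φ 1)) =
      if ∃ s, φ.seq s = i then Finsupp.single φ 1 else 0 := by
  by_cases hj : ∃ s, φ.seq s = i
  · rw [if_pos hj, psiStar_single, dif_pos hj, map_smul]
    set s₀ := hj.choose with hs₀def
    have hs₀ : φ.seq s₀ = i := hj.choose_spec
    have hnm : ∀ t, (φ.removeSIM s₀).seq t ≠ i := by
      rw [← hs₀]; exact SIM.not_mem_removeSIM φ s₀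
    rw [psi_single, dif_pos hnm]
    have hw : (φ.removeSIM s₀).wedgePos i = s₀ := by
      rw [← hs₀]; exact SIM.wedgePos_removeSIM φ s₀
    have hins : (φ.removeSIM s₀).insertSIM i hnm = φ := by
      have := SIM.insert_removeSIM φ s₀ (hs₀ ▸ hnm)
      convert this using 2 <;> rw [hs₀]
    rw [hw, hins, smul_smul, ← mul_pow]
    norm_num
  · rw [if_neg hj, psiStar_single, dif_neg hj, map_zero]

open Classical in
theorem EE_diag_apply (i : ℤ) (x : FockF) (ψ : SIM) :
    (psi i (psiStar i x)) ψ = if ∃ s, ψ.seq s = i then x ψ else 0 := by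
  induction x using Finsupp.induction_linear with
  | zero => simp
  | add f g hf hg =>
    rw [map_add, map_add, Finsupp.add_apply, hf, hg, Finsupp.add_apply]
    split <;> simp
  | single a b =>
    have hb : (Finsupp.single a b : FockF) = b • Finsupp.single a 1 := by simp
    rw [hb, map_smul, map_smul, EE_diag, Finsupp.smul_apply]
    by_cases hψa : ψ = a
    · subst hψa
      by_cases ha : ∃ s, ψ.seq s = i
      · rw [if_pos ha, if_pos ha]; simp
      · rw [if_neg ha, if_neg ha]; simp
    · by_cases ha : ∃ s, a.seq s = i <;> by_cases hψ : ∃ s, ψ.seq s = i <;>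
        simp [ha, hψ, Finsupp.single_apply, Ne.symm hψa]

open Classical in
theorem EE_single_move (i j : ℤ) (φ : SIM) (hj : ∃ s, φ.seq s = j) (hi : ∀ s, φ.seq s ≠ i) :
    ∃ (c : ℂ) (φ' : SIM), c ≠ 0 ∧
      psi i (psiStar j (Finsupp.single φ 1)) = c • Finsupp.single φ' 1 ∧
      Set.range φ'.seq = insert i (Set.range φ.seq \ {j}) ∧
      ∀ m : ℤ, φ.HasCharge m → φ'.HasCharge m := by
  rw [psiStar_single, dif_pos hj, map_smul]
  set s₀ := hj.choose with hs₀def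
  have hs₀ : φ.seq s₀ = j := hj.choose_spec
  have hnm : ∀ t, (φ.removeSIM s₀).seq t ≠ i := by
    intro t ht
    have : (φ.removeSIM s₀).seq t ∈ Set.range φ.seq \ {φ.seq s₀} := by
      rw [← SIM.range_removeSIM]; exact ⟨t, rfl⟩
    obtain ⟨⟨k, hk⟩, _⟩ := this
    exact hi k (by rw [hk, ht])
  rw [psi_single, dif_pos hnm]
  refine ⟨(-1 : ℂ) ^ s₀ * (-1) ^ ((φ.removeSIM s₀).wedgePos i),
    (φ.removeSIM s₀).insertSIM i hnm, ?_, by rw [smul_smul], ?_, ?_⟩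
  · apply mul_ne_zero <;> exact pow_ne_zero _ (by norm_num)
  · rw [SIM.range_insertSIM, SIM.range_removeSIM, hs₀]
  · intro m hm
    have h1 := SIM.hasCharge_removeSIM hm s₀
    have h2 := SIM.hasCharge_insertSIM h1 i hnm
    simpa using h2

open Classical in
theorem EE_single_mem (i j : ℤ) {φ : SIM} {m : ℤ} (hφ : φ.HasCharge m) :
    psi i (psiStar j (Finsupp.single φ 1)) ∈ chargeSubspace m := by
  by_cases hj : ∃ s, φ.seq s = j
  · rw [psiStar_single, dif_pos hj, map_smul]
    set s₀ := hj.choose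
    by_cases hi : ∀ t, (φ.removeSIM s₀).seq t ≠ i
    · rw [psi_single, dif_pos hi, smul_smul]
      have h2 : ((φ.removeSIM s₀).insertSIM i hi).HasCharge m := by
        simpa using SIM.hasCharge_insertSIM (SIM.hasCharge_removeSIM hφ s₀) i hi
      exact Submodule.smul_mem _ _ (Submodule.subset_span ⟨_, h2, rfl⟩)
    · rw [psi_single, dif_neg hi, smul_zero]
      exact Submodule.zero_mem _
  · rw [psiStar_single, dif_neg hj, map_zero]
    exact Submodule.zero_mem _

theorem chargeSubspace_eq_supported (m : ℤ) :
    chargeSubspace m = Finsupp.supported ℂ ℂ {φ : SIM | φ.HasCharge m} := by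
  rw [Finsupp.supported_eq_span_single, chargeSubspace]
  congr 1
  ext x
  simp only [Set.mem_setOf_eq, Set.mem_image]
  constructor
  · rintro ⟨φ, h1, rfl⟩; exact ⟨φ, h1, rfl⟩
  · rintro ⟨φ, h1, rfl⟩; exact ⟨φ, h1, rfl⟩

theorem step1 (m : ℤ) (S : Submodule ℂ FockF) (hS : S ≤ chargeSubspace m)
    (hinv : ∀ i j : ℤ, ∀ x ∈ S, psi i (psiStar j x) ∈ S) :
    ∀ x ∈ S, x ≠ 0 → ∃ φ : SIM, φ.HasCharge m ∧ Finsupp.single φ 1 ∈ S := by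
  classical
  have key : ∀ n : ℕ, ∀ x ∈ S, x ≠ 0 → x.support.card ≤ n →
      ∃ φ : SIM, φ.HasCharge m ∧ Finsupp.single φ 1 ∈ S := by
    intro n
    induction n with
    | zero =>
      intro x hx hx0 hc
      exact absurd (Finsupp.support_eq_empty.mp (Finset.card_eq_zero.mp (by omega))) hx0
    | succ n ih =>
      intro x hx hx0 hc
      obtain ⟨φ, hφ⟩ := Finsupp.support_nonempty_iff.mpr hx0
      have hφm : φ.HasCharge m := by
        have := (Finsupp.mem_supported ℂ x).mp (by rw [← chargeSubspace_eq_supported]; exact hS hx)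
        exact this hφ
      by_cases hone : ∀ ψ ∈ x.support, ψ = φ
      · have hxe : x = Finsupp.single φ (x φ) := by
          ext ψ
          by_cases hψ : ψ = φ
          · subst hψ; simp
          · rw [Finsupp.single_apply, if_neg (Ne.symm hψ)]
            by_contra h
            exact hψ (hone ψ (Finsupp.mem_support_iff.mpr h))
        have hxφ : x φ ≠ 0 := Finsupp.mem_support_iff.mp hφ
        refine ⟨φ, hφm, ?_⟩
        have : Finsupp.single φ 1 = (x φ)⁻¹ • x := by
          conv_rhs => rw [hxe]
          rw [Finsupp.smul_single, smul_eq_mul, Finsupp.single_eq_same, inv_mul_cancel₀ hxφ]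
        rw [this]
        exact Submodule.smul_mem _ _ hx
      · push_neg at hone
        obtain ⟨ψ, hψ, hψφ⟩ := hone
        -- find i distinguishing φ and ψ
        have hψm : ψ.HasCharge m := by
          have := (Finsupp.mem_supported ℂ x).mp (by rw [← chargeSubspace_eq_supported]; exact hS hx)
          exact this hψ
        have hne : ¬ (Set.range ψ.seq ⊆ Set.range φ.seq ∧ Set.range φ.seq ⊆ Set.range ψ.seq) := by
          rintro ⟨h1, h2⟩
          exact hψφ (SIM.eq_of_range_subset hψm hφm h1)
        have hdist : ∃ (a b : SIM) (i : ℤ), a ∈ x.support ∧ b ∈ x.support ∧ b ≠ a ∧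
            (∃ s, a.seq s = i) ∧ (∀ s, b.seq s ≠ i) := by
          rcases not_and_or.mp hne with h | h
          · obtain ⟨i, hi1, hi2⟩ := Set.not_subset.mp h
            obtain ⟨s, hs⟩ := hi1
            exact ⟨ψ, φ, i, hψ, hφ, Ne.symm hψφ, ⟨s, hs⟩, fun s hs' => hi2 ⟨s, hs'⟩⟩
          · obtain ⟨i, hi1, hi2⟩ := Set.not_subset.mp h
            obtain ⟨s, hs⟩ := hi1
            exact ⟨φ, ψ, i, hφ, hψ, hψφ, ⟨s, hs⟩, fun s hs' => hi2 ⟨s, hs'⟩⟩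
        obtain ⟨a, b, i, ha, hb, hba, hia, hib⟩ := hdist
        set y := psi i (psiStar i x) with hy
        have hyS : y ∈ S := hinv i i x hx
        have hya : y a = x a := by
          rw [hy, EE_diag_apply, if_pos hia]
        have hyb : y b = 0 := by
          rw [hy, EE_diag_apply, if_neg (by push_neg; exact hib)]
        have hy0 : y ≠ 0 := by
          intro h
          rw [h] at hya
          exact Finsupp.mem_support_iff.mp ha hya.symm
        have hysupp : y.support ⊆ x.support.erase b := by
          intro c hc
          rw [Finset.mem_erase]
          have hyc := Finsupp.mem_support_iff.mp hc
          constructor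
          · intro h; rw [h] at hyc; exact hyc hyb
          · rw [Finsupp.mem_support_iff]
            intro h
            rw [hy, EE_diag_apply, h] at hyc
            simp at hyc
        have hcard : y.support.card ≤ n := by
          have h1 := Finset.card_le_card hysupp
          have h2 : (x.support.erase b).card < x.support.card := Finset.card_erase_lt_of_mem hb
          omega
        exact ih y hyS hy0 hcard
  intro x hx hx0
  exact key x.support.card x hx hx0 le_rfl

theorem step2 (m : ℤ) (S : Submodule ℂ FockF)
    (hinv : ∀ i j : ℤ, ∀ x ∈ S, psi i (psiStar j x) ∈ S)
    (ψ : SIM) (hψ : ψ.HasCharge m) :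
    ∀ φ : SIM, φ.HasCharge m → Finsupp.single φ 1 ∈ S → Finsupp.single ψ 1 ∈ S := by
  classical
  have key : ∀ n : ℕ, ∀ φ : SIM, φ.HasCharge m → Finsupp.single φ 1 ∈ S →
      (Set.range φ.seq \ Set.range ψ.seq).ncard ≤ n → Finsupp.single ψ 1 ∈ S := by
    intro n
    induction n with
    | zero =>
      intro φ hφ hmem hn
      have hfin := SIM.diff_finite hφ hψ
      have : Set.range φ.seq \ Set.range ψ.seq = ∅ :=
        (Set.ncard_eq_zero hfin).mp (by omega)
      have hsub : Set.range φ.seq ⊆ Set.range ψ.seq := by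
        rw [← Set.diff_eq_empty]; exact this
      rwa [SIM.eq_of_range_subset hφ hψ hsub] at hmem
    | succ n ih =>
      intro φ hφ hmem hn
      by_cases hend : Set.range φ.seq ⊆ Set.range ψ.seq
      · rwa [SIM.eq_of_range_subset hφ hψ hend] at hmem
      · obtain ⟨j, hj1, hj2⟩ := Set.not_subset.mp hend
        have hrev : ¬ Set.range ψ.seq ⊆ Set.range φ.seq := by
          intro h
          rw [SIM.eq_of_range_subset hψ hφ h] at hj2
          exact hj2 hj1
        obtain ⟨i, hi1, hi2⟩ := Set.not_subset.mp hrev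
        have hjex : ∃ s, φ.seq s = j := hj1
        have hiall : ∀ s, φ.seq s ≠ i := fun s hs => hi2 ⟨s, hs⟩
        obtain ⟨c, φ', hc, heq, hrange, hch⟩ := EE_single_move i j φ hjex hiall
        have hφ'S : Finsupp.single φ' 1 ∈ S := by
          have h1 : psi i (psiStar j (Finsupp.single φ 1)) ∈ S := hinv i j _ hmem
          rw [heq] at h1
          have := Submodule.smul_mem S c⁻¹ h1
          rwa [smul_smul, inv_mul_cancel₀ hc, one_smul] at this
        apply ih φ' (hch m hφ) hφ'S
        have hrange' : Set.range φ'.seq \ Set.range ψ.seq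
            = (Set.range φ.seq \ Set.range ψ.seq) \ {j} := by
          rw [hrange]
          ext x
          simp only [Set.mem_diff, Set.mem_insert_iff, Set.mem_singleton_iff]
          constructor
          · rintro ⟨rfl | ⟨h1, h2⟩, h3⟩
            · exact absurd hi1 h3
            · exact ⟨⟨h1, h3⟩, h2⟩
          · rintro ⟨⟨h1, h3⟩, h2⟩
            exact ⟨Or.inr ⟨h1, h2⟩, h3⟩
        rw [hrange']
        have hfin := SIM.diff_finite hφ hψ
        have hjin : j ∈ Set.range φ.seq \ Set.range ψ.seq := ⟨hj1, hj2⟩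
        have hlt := Set.ncard_diff_singleton_lt_of_mem hjin hfin
        omega
  intro φ hφ hmem
  exact key (Set.range φ.seq \ Set.range ψ.seq).ncard φ hφ hmem le_rfl

/-- for every `m ∈ ℤ`, each operator `ψ_i ψ_j^*` preserves the charge-`m`
subspace `F^{(m)}`, and the only `ℂ`-subspaces of `F^{(m)}` invariant under all the
operators `ψ_i ψ_j^*` are `0` and `F^{(m)}` itself. -/
theorem charge_subspace_glInfinity_irreducible (m : ℤ) :
    (∀ i j : ℤ, ∀ x ∈ chargeSubspace m, psi i (psiStar j x) ∈ chargeSubspace m) ∧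
    (∀ S : Submodule ℂ FockF, S ≤ chargeSubspace m →
      (∀ i j : ℤ, ∀ x ∈ S, psi i (psiStar j x) ∈ S) → S = ⊥ ∨ S = chargeSubspace m) := by
  constructor
  · intro i j x hx
    induction hx using Submodule.span_induction with
    | mem y hy =>
      obtain ⟨φ, hφ, rfl⟩ := hy
      exact EE_single_mem i j hφ
    | zero => rw [map_zero, map_zero]; exact Submodule.zero_mem _
    | add y z _ _ hy hz => rw [map_add, map_add]; exact Submodule.add_mem _ hy hz
    | smul c y _ hy => rw [map_smul, map_smul]; exact Submodule.smul_mem _ _ hy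
  · intro S hle hinv
    by_cases hbot : S = ⊥
    · exact Or.inl hbot
    · right
      obtain ⟨x, hxS, hx0⟩ := Submodule.exists_mem_ne_zero_of_ne_bot hbot
      obtain ⟨φ, hφm, hφS⟩ := step1 m S hle hinv x hxS hx0
      apply le_antisymm hle
      rw [chargeSubspace]
      apply Submodule.span_le.mpr
      rintro _ ⟨ψ, hψm, rfl⟩
      exact step2 m S hinv ψ hψm φ hφm hφS
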